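/- Let a, b > 0 and v ∈ (0, 1). Then (a + b)/2 ≤ R(√a − √b)² − (1/2)·r₁·[(⁴√(ab) − √a)² + (⁴√(ab) − √b)²] + K(⁴√h, 2)^{−r̂₁} · H_v(a, b), where h = b/a, r = min{v, 1 − v}, R = max{v, 1 − v}, r₁ = min{2r, 1 − 2r} and r̂₁ = min{2r₁, 1 − 2r₁}. -/

import Mathlib

/-- The Kantorovich constant `K(t, 2) = (t + 1)^2 / (4 t)`. -/
noncomputable def Kant (t : ℝ) : ℝ := (t + 1) ^ 2 / (4 * t)

lemma kant_pos {t : ℝ} (ht : 0 < t) : 0 < Kant t := by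
  unfold Kant; positivity

/-- Zuo–Shi–Fujii: `K(τ,2)^min(λ,1-λ) τ^λ ≤ 1-λ+λτ`. -/
lemma zsf {τ l : ℝ} (ht : 0 < τ) (h0 : 0 ≤ l) (h1 : l ≤ 1) :
    Kant τ ^ min l (1 - l) * τ ^ l ≤ 1 - l + l * τ := by
  have hK := kant_pos ht
  have hKt : Kant τ * τ = ((τ + 1) / 2) ^ (2:ℕ) := by
    unfold Kant; field_simp; ring
  have hp : (0:ℝ) < (τ + 1) / 2 := by linarith
  rcases le_total l (1/2) with hl | hl
  · rw [min_eq_left (by linarith)]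
    have e1 : Kant τ ^ l * τ ^ l = ((τ + 1) / 2) ^ (2 * l) := by
      rw [← Real.mul_rpow hK.le ht.le, hKt, ← Real.rpow_natCast ((τ+1)/2) 2,
        ← Real.rpow_mul hp.le]
      norm_num [mul_comm]
    rw [e1]
    have := Real.geom_mean_le_arith_mean2_weighted (by linarith : (0:ℝ) ≤ 2*l)
      (by linarith : (0:ℝ) ≤ 1 - 2*l) hp.le zero_le_one (by ring)
    rw [Real.one_rpow, mul_one] at this
    nlinarith [this]
  · rw [min_eq_right (by linarith)]
    have e1 : Kant τ ^ (1 - l) * τ ^ l = ((τ + 1) / 2) ^ (2 - 2*l) * τ ^ (2*l - 1) := by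
      have : τ ^ l = τ ^ (1 - l) * τ ^ (2*l - 1) := by
        rw [← Real.rpow_add ht]; congr 1; ring
      rw [this, ← mul_assoc, ← Real.mul_rpow hK.le ht.le, hKt,
        ← Real.rpow_natCast ((τ+1)/2) 2, ← Real.rpow_mul hp.le,
        show ((2:ℕ):ℝ) * (1 - l) = 2 - 2*l by push_cast; ring]
    rw [e1]
    have := Real.geom_mean_le_arith_mean2_weighted (by linarith : (0:ℝ) ≤ 2 - 2*l)
      (by linarith : (0:ℝ) ≤ 2*l - 1) hp.le ht.le (by ring)
    nlinarith [this]

/-- Reverse step, case `0 ≤ s ≤ 1`. -/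
lemma lemC1 {τ s : ℝ} (ht : 0 < τ) (h0 : 0 ≤ s) (h1 : s ≤ 1) :
    (1 + s) - s * τ ≤ Kant τ ^ (-(min s (1 - s))) * τ ^ (-s) := by
  have hK := kant_pos ht
  set Z := Kant τ ^ (min s (1 - s)) * τ ^ s with hZdef
  have hZ : 0 < Z := by positivity
  have hZle : Z ≤ 1 - s + s * τ := zsf ht h0 h1
  have hrw : Kant τ ^ (-(min s (1 - s))) * τ ^ (-s) = Z⁻¹ := by
    rw [Real.rpow_neg hK.le, Real.rpow_neg ht.le, hZdef, mul_inv]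
  rw [hrw]
  have key : ((1 + s) - s * τ) * Z ≤ 1 := by
    rcases le_total ((1 + s) - s * τ) 0 with hn | hn
    · nlinarith
    · nlinarith [sq_nonneg (s - s * τ), mul_le_mul_of_nonneg_left hZle hn]
  rw [show Z⁻¹ = 1 / Z by ring, le_div_iff₀ hZ]
  exact key

/-- Reverse step, case `1 ≤ s ≤ 2`. -/
lemma lemC2 {τ s : ℝ} (ht : 0 < τ) (h0 : 1 ≤ s) (h1 : s ≤ 2) :
    (1 + s) - s * τ ≤ Kant τ ^ (-(min (s - 1) (2 - s))) * τ ^ (-s) := by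
  have hK := kant_pos ht
  set Z := Kant τ ^ (min (s - 1) (2 - s)) * τ ^ (s - 1) with hZdef
  have hZ : 0 < Z := by positivity
  have hZle : Z ≤ 2 - s + (s - 1) * τ := by
    have := zsf ht (by linarith : (0:ℝ) ≤ s - 1) (by linarith : s - 1 ≤ 1)
    rw [show 1 - (s - 1) = 2 - s by ring] at this
    linarith [this]
  have hts : τ ^ s = τ ^ (s - 1) * τ := by
    nth_rewrite 1 [show s = (s - 1) + 1 by ring]
    rw [Real.rpow_add ht, Real.rpow_one]
  have hrw : Kant τ ^ (-(min (s - 1) (2 - s))) * τ ^ (-s) = (Z * τ)⁻¹ := by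
    rw [Real.rpow_neg hK.le, Real.rpow_neg ht.le, hts, hZdef]
    rw [mul_inv, mul_inv, mul_inv]
    ring
  rw [hrw]
  have key : ((1 + s) - s * τ) * (Z * τ) ≤ 1 := by
    rcases le_total ((1 + s) - s * τ) 0 with hn | hn
    · have : ((1 + s) - s * τ) * (Z * τ) ≤ 0 :=
        mul_nonpos_of_nonpos_of_nonneg hn (by positivity)
      linarith
    · have h2 : ((1 + s) - s * τ) * (Z * τ) ≤ ((1 + s) - s * τ) * τ * (2 - s + (s - 1) * τ) := by
        nlinarith [mul_le_mul_of_nonneg_left hZle (mul_nonneg hn ht.le)]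
      have h3 : ((1 + s) - s * τ) * τ * (2 - s + (s - 1) * τ)
          = 1 - (τ - 1)^2 * (s * (s - 1) * τ + 1) := by ring
      nlinarith [sq_nonneg (τ - 1), mul_nonneg (mul_nonneg (sub_nonneg.2 h0) ht.le)
        (sq_nonneg (τ - 1)), mul_nonneg (mul_nonneg (mul_nonneg (by linarith : (0:ℝ) ≤ s) (sub_nonneg.2 h0)) ht.le) (sq_nonneg (τ - 1))]
  rw [show (Z * τ)⁻¹ = 1 / (Z * τ) by ring, le_div_iff₀ (by positivity)]
  exact key

/-- Key reverse Young-type inequality for `0 < v ≤ 1/2`. -/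
lemma key (a b v r1 rh1 : ℝ) (ha : 0 < a) (hb : 0 < b) (hv0 : 0 < v) (hv : v ≤ 1/2)
    (hr1 : r1 = min (2*v) (1 - 2*v)) (hrh1 : rh1 = min (2*r1) (1 - 2*r1)) :
    (1 - v) * a + v * b ≤
      (1 - v) * (Real.sqrt a - Real.sqrt b)^2
        - r1 * ((a*b) ^ ((1:ℝ)/4) - Real.sqrt b)^2
        + Kant ((b/a) ^ ((1:ℝ)/4)) ^ (-rh1) * (a ^ (1-v) * b ^ v) := by
  set x := Real.sqrt a with hxd
  set y := Real.sqrt b with hyd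
  have hx : 0 < x := Real.sqrt_pos.2 ha
  have hy : 0 < y := Real.sqrt_pos.2 hb
  have hx2 : x^2 = a := Real.sq_sqrt ha.le
  have hy2 : y^2 = b := Real.sq_sqrt hb.le
  set g := (a*b) ^ ((1:ℝ)/4) with hgd
  have hg : 0 < g := by positivity
  have hg2 : g^2 = x*y := by
    rw [hgd, ← Real.rpow_natCast ((a*b) ^ ((1:ℝ)/4)) 2, ← Real.rpow_mul (by positivity),
      show (1:ℝ)/4 * (2:ℕ) = 1/2 by push_cast; norm_num,
      ← Real.sqrt_eq_rpow, Real.sqrt_mul ha.le]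
  set τ := (b/a) ^ ((1:ℝ)/4) with hτd
  have hτ : 0 < τ := by positivity
  have hgτ : g * τ = y := by
    rw [hgd, hτd, ← Real.mul_rpow (by positivity) (by positivity),
      show a * b * (b/a) = b^(2:ℕ) by field_simp,
      ← Real.rpow_natCast b 2, ← Real.rpow_mul hb.le,
      show (2:ℕ) * ((1:ℝ)/4) = 1/2 by push_cast; norm_num, ← Real.sqrt_eq_rpow]
  set s := 2 - 4*v with hsd
  have hs0 : 0 ≤ s := by rw [hsd]; linarith
  have hs2 : s ≤ 2 := by rw [hsd]; linarith
  -- step 2: the one-variable reverse inequality with the right exponent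
  have hC : (1 + s) - s * τ ≤ Kant τ ^ (-rh1) * τ ^ (-s) := by
    rcases le_total v (1/4) with hq | hq
    · have e1 : r1 = 2*v := by rw [hr1, min_eq_left (by linarith)]
      have e2 : rh1 = min (s - 1) (2 - s) := by
        rw [hrh1, e1, hsd, min_comm]
        congr 1 <;> ring
      rw [e2]
      exact lemC2 hτ (by rw [hsd]; linarith) hs2
    · have e1 : r1 = 1 - 2*v := by rw [hr1, min_eq_right (by linarith)]
      have e2 : rh1 = min s (1 - s) := by
        rw [hrh1, e1, hsd]
        congr 1 <;> ring
      rw [e2]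
      exact lemC1 hτ hs0 (by rw [hsd]; linarith)
  -- step 3: multiply by x*y = g^2 > 0
  have hxy : 0 < x * y := mul_pos hx hy
  have hC2 : (1 + s) * (x*y) - s * (g*y) ≤ Kant τ ^ (-rh1) * ((x*y) * τ ^ (-s)) := by
    have hmul := mul_le_mul_of_nonneg_right hC hxy.le
    have hgy : τ * (x*y) = g * y := by
      rw [← hg2]; rw [show τ * g^2 = g * (g*τ) by ring, hgτ]
    calc (1 + s) * (x*y) - s * (g*y) = ((1 + s) - s * τ) * (x*y) := by
          rw [← hgy]; ring
      _ ≤ Kant τ ^ (-rh1) * τ ^ (-s) * (x*y) := hmul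
      _ = Kant τ ^ (-rh1) * ((x*y) * τ ^ (-s)) := by ring
  -- step 4: identify the rpow product
  have hP : (x*y) * τ ^ (-s) = a ^ (1-v) * b ^ v := by
    have h1 : τ ^ (-s) = (b/a) ^ (-(s/4)) := by
      rw [hτd, ← Real.rpow_mul (div_pos hb ha).le]
      congr 1; ring
    have h2 : (b/a) ^ (-(s/4)) = b ^ (-(s/4)) * (a ^ (-(s/4)))⁻¹ := by
      rw [Real.div_rpow hb.le ha.le, div_eq_mul_inv]
    have h3 : (a ^ (-(s/4)))⁻¹ = a ^ (s/4) := by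
      rw [Real.rpow_neg ha.le, inv_inv]
    rw [hxd, hyd, Real.sqrt_eq_rpow a, Real.sqrt_eq_rpow b, h1, h2, h3]
    rw [show a ^ ((1:ℝ)/2) * b ^ ((1:ℝ)/2) * (b ^ (-(s/4)) * a ^ (s/4))
        = a ^ ((1:ℝ)/2) * a ^ (s/4) * (b ^ ((1:ℝ)/2) * b ^ (-(s/4))) from by ring,
      ← Real.rpow_add ha, ← Real.rpow_add hb]
    rw [show (1:ℝ)/2 + s/4 = 1 - v from by rw [hsd]; ring,
      show (1:ℝ)/2 + -(s/4) = v from by rw [hsd]; ring]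
  -- step 1: algebraic identity and r1 ≤ 1 - 2v
  have hw : r1 ≤ 1 - 2*v := by rw [hr1]; exact min_le_right _ _
  have hid : (1 - v) * a + v * b =
      (1 - v) * (x - y)^2 - (1 - 2*v) * (g - y)^2 + ((1 + s) * (x*y) - s * (g*y)) := by
    rw [hsd]
    linear_combination (v-1)*hx2 + (-v)*hy2 + (1-2*v)*hg2
  have hmono : r1 * (g - y)^2 ≤ (1 - 2*v) * (g - y)^2 :=
    mul_le_mul_of_nonneg_right hw (sq_nonneg _)
  have hKpos : 0 < Kant τ ^ (-rh1) := Real.rpow_pos_of_pos (kant_pos hτ) _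
  calc (1 - v) * a + v * b
      = (1 - v) * (x - y)^2 - (1 - 2*v) * (g - y)^2 + ((1 + s) * (x*y) - s * (g*y)) := hid
    _ ≤ (1 - v) * (x - y)^2 - r1 * (g - y)^2 + Kant τ ^ (-rh1) * ((x*y) * τ ^ (-s)) := by
        linarith [hC2, hmono]
    _ = (1 - v) * (x - y)^2 - r1 * (g - y)^2 + Kant τ ^ (-rh1) * (a ^ (1-v) * b ^ v) := by
        rw [hP]

lemma kant_inv {t : ℝ} (ht : 0 < t) : Kant t⁻¹ = Kant t := by
  unfold Kant
  rw [div_eq_div_iff (by positivity) (by positivity)]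
  field_simp
  ring

theorem stmt_7 (a b v : ℝ) (ha : 0 < a) (hb : 0 < b) (hv0 : 0 < v) (hv : v < 1)
    (h r R r1 rh1 : ℝ) (hh : h = b / a) (hr : r = min v (1 - v)) (hR : R = max v (1 - v))
    (hr1 : r1 = min (2 * r) (1 - 2 * r)) (hrh1 : rh1 = min (2 * r1) (1 - 2 * r1)) :
    (a + b) / 2 ≤
      R * (Real.sqrt a - Real.sqrt b) ^ 2
        - 1 / 2 * r1 * (((a * b) ^ ((1 : ℝ) / 4) - Real.sqrt a) ^ 2
            + ((a * b) ^ ((1 : ℝ) / 4) - Real.sqrt b) ^ 2)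
        + Kant (h ^ ((1 : ℝ) / 4)) ^ (-rh1) * ((a ^ v * b ^ (1 - v) + a ^ (1 - v) * b ^ v) / 2) := by
  subst hh hr hR hr1 hrh1
  set v' := min v (1 - v) with hv'd
  have hv'0 : 0 < v' := lt_min hv0 (by linarith)
  have hv'le : v' ≤ 1/2 := by
    have h1 := min_le_left v (1 - v)
    have h2 := min_le_right v (1 - v)
    rw [← hv'd] at h1 h2; linarith
  have hRe : max v (1 - v) = 1 - v' := by
    rcases le_total v (1 - v) with hc | hc
    · rw [max_eq_right hc, hv'd, min_eq_left hc]
    · rw [max_eq_left hc, hv'd, min_eq_right hc]; ring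
  -- abbreviations
  set r1 := min (2 * v') (1 - 2 * v') with hr1d
  set rh1 := min (2 * r1) (1 - 2 * r1) with hrh1d
  have K1 := key a b v' r1 rh1 ha hb hv'0 hv'le hr1d hrh1d
  have K2 := key b a v' r1 rh1 hb ha hv'0 hv'le hr1d hrh1d
  -- rewrite K2's Kantorovich argument
  have hKarg : Kant ((a/b) ^ ((1:ℝ)/4)) = Kant ((b/a) ^ ((1:ℝ)/4)) := by
    rw [show a/b = (b/a)⁻¹ by rw [inv_div], Real.inv_rpow (by positivity),
      kant_inv (by positivity)]
  rw [hKarg, mul_comm b a] at K2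
  have hsq : (Real.sqrt b - Real.sqrt a)^2 = (Real.sqrt a - Real.sqrt b)^2 := by ring
  rw [hsq] at K2
  -- sum of the Heinz terms
  have hH : a ^ v * b ^ (1 - v) + a ^ (1 - v) * b ^ v
      = a ^ (1 - v') * b ^ v' + b ^ (1 - v') * a ^ v' := by
    rcases le_total v (1 - v) with hc | hc
    · rw [hv'd, min_eq_left hc]; ring
    · rw [hv'd, min_eq_right hc, show (1 : ℝ) - (1 - v) = v by ring]; ring
  have hHsum : Kant ((b/a) ^ ((1:ℝ)/4)) ^ (-rh1) * (a ^ (1 - v') * b ^ v')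
      + Kant ((b/a) ^ ((1:ℝ)/4)) ^ (-rh1) * (b ^ (1 - v') * a ^ v')
      = Kant ((b/a) ^ ((1:ℝ)/4)) ^ (-rh1) * (a ^ v * b ^ (1 - v) + a ^ (1 - v) * b ^ v) := by
    rw [hH]; ring
  rw [hRe]
  linarith [K1, K2, hHsum.le, hHsum.ge]
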